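/- arXiv:1803.06887 — 2 statements merged into one kernel-verified Lean document; each statement's English description precedes it below -/
import Mathlib

section
/- If a random vector x ∈ ℝ^m is both s-rectifiable and t-rectifiable (s, t ∈ ℕ), then s = t. -/
open MeasureTheory ENNReal NNReal

/-- A set `U ⊆ ℝ^m` is `s`-rectifiable if it is the image of a compact set `A ⊆ ℝ^s`
under a Lipschitz mapping. -/
def IsRectifiableSet (s : ℕ) {m : ℕ} (U : Set (EuclideanSpace ℝ (Fin m))) : Prop :=
  ∃ (A : Set (EuclideanSpace ℝ (Fin s)))
    (φ : EuclideanSpace ℝ (Fin s) → EuclideanSpace ℝ (Fin m)) (L : NNReal),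
    IsCompact A ∧ LipschitzOnWith L φ A ∧ U = φ '' A

/-- A set is countably `s`-rectifiable if it is a countable union of `s`-rectifiable sets. -/
def IsCountablyRectifiable (s : ℕ) {m : ℕ} (U : Set (EuclideanSpace ℝ (Fin m))) : Prop :=
  ∃ V : ℕ → Set (EuclideanSpace ℝ (Fin m)),
    (∀ i, IsRectifiableSet s (V i)) ∧ U = ⋃ i, V i

/-- A set is countably `(H^s, s)`-rectifiable if it is `H^s`-(null-)measurable and
coincides with a countably `s`-rectifiable set up to an `H^s`-null set. -/
def IsCountablyHRectifiable (s : ℕ) {m : ℕ} (U : Set (EuclideanSpace ℝ (Fin m))) : Prop :=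
  NullMeasurableSet U (μH[(s : ℝ)]) ∧
  ∃ V : Set (EuclideanSpace ℝ (Fin m)), IsCountablyRectifiable s V ∧ μH[(s : ℝ)] (U \ V) = 0

/-- A random vector `x ∈ ℝ^m` (with distribution `μ`) is `s`-rectifiable if
`μ ≪ H^s|_U` for some countably `(H^s,s)`-rectifiable set `U`. -/
def IsRectifiableRV (s : ℕ) {m : ℕ} (μ : Measure (EuclideanSpace ℝ (Fin m))) : Prop :=
  ∃ U : Set (EuclideanSpace ℝ (Fin m)),
    IsCountablyHRectifiable s U ∧ μ ≪ (μH[(s : ℝ)]).restrict U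

lemma compact_hausdorff_lt_top {s : ℕ} (A : Set (EuclideanSpace ℝ (Fin s)))
    (hA : IsCompact A) : μH[(s : ℝ)] A < ⊤ := by
  have h : (s : ℝ) = ((Module.finrank ℝ (EuclideanSpace ℝ (Fin s)) : ℕ) : ℝ) := by
    rw [finrank_euclideanSpace_fin]
  rw [h]
  exact hA.measure_lt_top

lemma hausdorff_null_of_lt {s t m : ℕ} (hst : s < t)
    {U : Set (EuclideanSpace ℝ (Fin m))} (hU : IsCountablyHRectifiable s U) :
    μH[(t : ℝ)] U = 0 := by
  obtain ⟨-, V, ⟨W, hW, rfl⟩, hnull⟩ := hU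
  have hst' : (s : ℝ) < (t : ℝ) := by exact_mod_cast hst
  have hVi : ∀ i, μH[(t : ℝ)] (W i) = 0 := by
    intro i
    obtain ⟨A, φ, L, hA, hφ, hWi⟩ := hW i
    rcases Measure.hausdorffMeasure_zero_or_top hst' (W i) with h | h
    · exact h
    · exfalso
      have h1 : μH[(s : ℝ)] (W i) ≤ (L : ℝ≥0∞) ^ (s : ℝ) * μH[(s : ℝ)] A := by
        rw [hWi]; exact hφ.hausdorffMeasure_image_le (by positivity)
      have h2 : (L : ℝ≥0∞) ^ (s : ℝ) * μH[(s : ℝ)] A < ⊤ :=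
        ENNReal.mul_lt_top (ENNReal.rpow_lt_top_of_nonneg (by positivity)
          ENNReal.coe_ne_top) (compact_hausdorff_lt_top A hA)
      exact (h1.trans_lt h2).ne h
  have hV : μH[(t : ℝ)] (⋃ i, W i) = 0 := measure_iUnion_null hVi
  have hUV : μH[(t : ℝ)] (U \ ⋃ i, W i) = 0 :=
    le_antisymm (le_trans (Measure.hausdorffMeasure_mono hst'.le _) hnull.le) zero_le
  refine le_antisymm ?_ zero_le
  calc μH[(t : ℝ)] U ≤ μH[(t : ℝ)] ((U \ ⋃ i, W i) ∪ ⋃ i, W i) :=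
        measure_mono (Set.subset_diff_union U _)
    _ ≤ μH[(t : ℝ)] (U \ ⋃ i, W i) + μH[(t : ℝ)] (⋃ i, W i) := measure_union_le _ _
    _ = 0 := by rw [hV, hUV, add_zero]

lemma not_both {s t m : ℕ} (hst : s < t)
    (μ : Measure (EuclideanSpace ℝ (Fin m))) [IsProbabilityMeasure μ]
    (hs : IsRectifiableRV s μ) (ht : IsRectifiableRV t μ) : False := by
  obtain ⟨U, hUrect, hac⟩ := hs
  obtain ⟨U', -, hac'⟩ := ht
  have hU0 : μH[(t : ℝ)] U = 0 := hausdorff_null_of_lt hst hUrect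
  have hμU : μ U = 0 := hac' <| le_antisymm
    ((Measure.restrict_apply_le _ _).trans hU0.le) zero_le
  have hμUc : μ Uᶜ = 0 := by
    apply hac
    have hnm : NullMeasurableSet Uᶜ ((μH[(s : ℝ)]).restrict U) :=
      (hUrect.1.compl).mono_ac (Measure.absolutelyContinuous_of_le Measure.restrict_le_self)
    rw [Measure.restrict_apply₀ hnm, Set.compl_inter_self, measure_empty]
  have : (1 : ℝ≥0∞) ≤ 0 := by
    calc (1 : ℝ≥0∞) = μ Set.univ := (measure_univ).symm
      _ ≤ μ U + μ Uᶜ := by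
          rw [← Set.union_compl_self U]; exact measure_union_le _ _
      _ = 0 := by rw [hμU, hμUc, add_zero]
  simp at this

/-- The rectifiability parameter of a random vector is unique: if `x` is both
`s`-rectifiable and `t`-rectifiable, then `s = t`. -/
theorem rectifiability_parameter_unique {s t m : ℕ}
    (μ : Measure (EuclideanSpace ℝ (Fin m))) [IsProbabilityMeasure μ]
    (hs : IsRectifiableRV s μ) (ht : IsRectifiableRV t μ) : s = t := by
  rcases lt_trichotomy s t with h | h | h
  · exact (not_both h μ hs ht).elim
  · exact h
  · exact (not_both h μ ht hs).elim
end

section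
/- Suppose A ∈ ℝ^{n×m} is a matrix and g : ℝ^{n×m} × ℝ^n → ℝ^m is a Borel measurable mapping such that P[g(A, A x) ≠ x] < 1 for a random vector x ∈ ℝ^m. Then there exists a Borel set U ⊆ ℝ^m with P[x ∈ U] > 0 such that the linear map A is one-to-one on U. -/
open MeasureTheory

/-- If a Borel measurable decoder `g` recovers the random vector `x` from `(A, A x)`
with error probability smaller than one, then there exists a Borel set `U` of positive
probability on which the linear map induced by `A` is one-to-one. -/
theorem exists_injOn_of_decoder {m n : ℕ} (A : Fin n → Fin m → ℝ)
    (g : (Fin n → Fin m → ℝ) × (Fin n → ℝ) → (Fin m → ℝ)) (hg : Measurable g)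
    (μ : Measure (Fin m → ℝ)) [IsProbabilityMeasure μ]
    (h : μ {v : Fin m → ℝ | g (A, fun i => ∑ j, A i j * v j) ≠ v} < 1) :
    ∃ U : Set (Fin m → ℝ), MeasurableSet U ∧ 0 < μ U ∧
      Set.InjOn (fun v : Fin m → ℝ => (fun i => ∑ j, A i j * v j : Fin n → ℝ)) U := by
  set U : Set (Fin m → ℝ) := {v | g (A, fun i => ∑ j, A i j * v j) = v} with hU
  have hmeas : Measurable fun v : Fin m → ℝ => g (A, fun i => ∑ j, A i j * v j) := by
    exact hg.comp (measurable_const.prodMk (measurable_pi_lambda _ fun i =>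
      Finset.measurable_sum _ fun j _ => (measurable_pi_apply (X := fun _ : Fin m => ℝ) j).const_mul (A i j)))
  have hUmeas : MeasurableSet U := measurableSet_eq_fun hmeas measurable_id
  refine ⟨U, hUmeas, ?_, ?_⟩
  · have hc : μ Uᶜ < 1 := by
      rw [hU, Set.compl_setOf]; exact h
    by_contra hz
    push_neg at hz
    have h0 : μ U = 0 := le_antisymm hz bot_le
    rw [prob_compl_eq_one_sub hUmeas, h0, tsub_zero] at hc
    exact lt_irrefl _ hc
  · intro v₁ h₁ v₂ h₂ heq
    have := h₁
    calc v₁ = g (A, fun i => ∑ j, A i j * v₁ j) := h₁.symm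
      _ = g (A, fun i => ∑ j, A i j * v₂ j) := by simp only at heq; rw [heq]
      _ = v₂ := h₂
end
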